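/- Let R ≻ 0 be symmetric, F + Fᵀ ⪰ 0, B = LLᵀB, and consider the driven system (R+F)x^{n+1} = (R−F)x^n + Bu^n with storage E(x) = (Δt/2)xᵀRx. Then for every N ≥ 1, E(x^N) ≤ E(x^0) + Δt·Σ_{n=0}^{N−1} ((Lᵀx^n + Lᵀx^{n+1})ᵀ/2) LᵀB u^n. In particular, along any input sequence for which the cumulative supplied energy is bounded by a constant C, the state satisfies (x^N)ᵀ R x^N ≤ (x^0)ᵀ R x^0 + 2C/Δt for all N, so the trajectory remains bounded. -/

import Mathlib

open Matrix Finset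

/-- Telescoped dissipation inequality and boundedness for the driven FDTD system:
`E(x^N) ≤ E(x^0) + Δt Σ_{n<N} supply^n`, and if the cumulative supplied energy is
bounded by `C` then `(x^N)ᵀ R x^N ≤ (x^0)ᵀ R x^0 + 2C/Δt` for all `N`. -/
theorem stmt18 {n m : ℕ} (Δt : ℝ) (hΔt : 0 < Δt)
    (R F : Matrix (Fin n) (Fin n) ℝ) (B L : Matrix (Fin n) (Fin m) ℝ)
    (hR : R.PosDef) (hRsym : R = Rᵀ)
    (hF : (F + Fᵀ).PosSemidef)
    (hBL : B = L * Lᵀ * B)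
    (x : ℕ → Fin n → ℝ) (u : ℕ → Fin m → ℝ)
    (hsys : ∀ k : ℕ, (R + F).mulVec (x (k + 1)) = (R - F).mulVec (x k) + B.mulVec (u k))
    (E : (Fin n → ℝ) → ℝ) (hE : ∀ v, E v = (Δt / 2) * (v ⬝ᵥ R.mulVec v))
    (supply : ℕ → ℝ)
    (hsupply : ∀ k : ℕ, supply k =
      ((1 : ℝ) / 2) • (Lᵀ.mulVec (x k) + Lᵀ.mulVec (x (k + 1)))
        ⬝ᵥ (Lᵀ * B).mulVec (u k)) :
    (∀ N : ℕ, 1 ≤ N →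
      E (x N) ≤ E (x 0) + Δt * ∑ k ∈ Finset.range N, supply k) ∧
    ∀ C : ℝ, (∀ N : ℕ, ∑ k ∈ Finset.range N, Δt * supply k ≤ C) →
      ∀ N : ℕ, (x N) ⬝ᵥ R.mulVec (x N) ≤ (x 0) ⬝ᵥ R.mulVec (x 0) + 2 * C / Δt := by
  -- per-step inequality
  have step : ∀ k : ℕ,
      x (k+1) ⬝ᵥ R.mulVec (x (k+1)) ≤ x k ⬝ᵥ R.mulVec (x k) + 2 * supply k := by
    intro k
    set a := x k with ha
    set b := x (k+1) with hb
    set v := a + b with hv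
    have hsys' := hsys k
    have key : v ⬝ᵥ (R + F).mulVec b =
        v ⬝ᵥ (R - F).mulVec a + v ⬝ᵥ B.mulVec (u k) := by
      rw [hsys', dotProduct_add]
    -- symmetry of R
    have hsymR : ∀ p q : Fin n → ℝ, p ⬝ᵥ R.mulVec q = q ⬝ᵥ R.mulVec p := by
      intro p q
      rw [dotProduct_mulVec, ← mulVec_transpose, ← hRsym, dotProduct_comm]
    -- F quadratic form nonneg
    have hFv : 0 ≤ v ⬝ᵥ F.mulVec v := by
      have h1 := hF.dotProduct_mulVec_nonneg v
      have h2 : v ⬝ᵥ Fᵀ.mulVec v = v ⬝ᵥ F.mulVec v := by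
        rw [dotProduct_mulVec, ← mulVec_transpose, transpose_transpose, dotProduct_comm]
      have h3 : (0:ℝ) ≤ v ⬝ᵥ (F + Fᵀ).mulVec v := by
        have := hF.dotProduct_mulVec_nonneg v
        simpa [Matrix.dotProduct_mulVec] using this
      rw [add_mulVec, dotProduct_add, h2] at h3
      linarith
    -- supply rewritten
    have hsup : v ⬝ᵥ B.mulVec (u k) = 2 * supply k := by
      have : v ⬝ᵥ B.mulVec (u k) = (Lᵀ.mulVec v) ⬝ᵥ (Lᵀ * B).mulVec (u k) := by
        conv_lhs => rw [hBL]
        rw [Matrix.mul_assoc, ← mulVec_mulVec, dotProduct_mulVec, ← mulVec_transpose]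
      rw [this, hsupply k, ← hb]
      have hLv : Lᵀ.mulVec v = Lᵀ.mulVec a + Lᵀ.mulVec b := by
        rw [hv, mulVec_add]
      rw [hLv, smul_dotProduct, smul_eq_mul]
      ring
    have e1 : v ⬝ᵥ (R + F).mulVec b = v ⬝ᵥ R.mulVec b + v ⬝ᵥ F.mulVec b := by
      rw [add_mulVec, dotProduct_add]
    have e2 : v ⬝ᵥ (R - F).mulVec a = v ⬝ᵥ R.mulVec a - v ⬝ᵥ F.mulVec a := by
      rw [sub_mulVec, dotProduct_sub]
    have eRb : v ⬝ᵥ R.mulVec b = a ⬝ᵥ R.mulVec b + b ⬝ᵥ R.mulVec b := by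
      rw [hv, add_dotProduct]
    have eRa : v ⬝ᵥ R.mulVec a = a ⬝ᵥ R.mulVec a + b ⬝ᵥ R.mulVec a := by
      rw [hv, add_dotProduct]
    have eFv : v ⬝ᵥ F.mulVec v = v ⬝ᵥ F.mulVec a + v ⬝ᵥ F.mulVec b := by
      have hFs : F.mulVec v = F.mulVec a + F.mulVec b := by rw [hv, mulVec_add]
      rw [hFs, dotProduct_add]
    have expand : v ⬝ᵥ (R + F).mulVec b - v ⬝ᵥ (R - F).mulVec a =
        (b ⬝ᵥ R.mulVec b - a ⬝ᵥ R.mulVec a) + v ⬝ᵥ F.mulVec v := by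
      rw [e1, e2, eRb, eRa, eFv]
      linarith [hsymR a b]
    have : (b ⬝ᵥ R.mulVec b - a ⬝ᵥ R.mulVec a) + v ⬝ᵥ F.mulVec v = 2 * supply k := by
      rw [← hsup]; linarith [key, expand]
    linarith
  have tele : ∀ N : ℕ,
      x N ⬝ᵥ R.mulVec (x N) ≤ x 0 ⬝ᵥ R.mulVec (x 0) + 2 * ∑ k ∈ Finset.range N, supply k := by
    intro N
    induction N with
    | zero => simp
    | succ N ih =>
      have := step N
      rw [Finset.sum_range_succ]
      linarith
  constructor
  · intro N _
    rw [hE, hE]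
    have := tele N
    have h2 : Δt * ∑ k ∈ Finset.range N, supply k =
        (Δt / 2) * (2 * ∑ k ∈ Finset.range N, supply k) := by ring
    nlinarith [tele N]
  · intro C hC N
    have h1 := tele N
    have h2 : Δt * ∑ k ∈ Finset.range N, supply k ≤ C := by
      have := hC N
      rwa [← Finset.mul_sum] at this
    have h3 : ∑ k ∈ Finset.range N, supply k ≤ C / Δt := by
      rw [le_div_iff₀ hΔt] at *
      linarith
    have : 2 * C / Δt = 2 * (C / Δt) := by ring
    rw [this]
    linarith
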